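/- Let 0 → ℤ/2 → G → A → 0 be a short exact sequence of abelian groups. The sequence splits if and only if every element g ∈ G whose image in A has order at most 2 itself has order at most 2. -/

import Mathlib

/-!
STATEMENT 2: Let `0 → ℤ/2 →ᵘ G →ʰ A → 0` be a short exact sequence of abelian
groups.  The sequence splits (i.e. there is a retraction `κ : G → ℤ/2` with
`κ ∘ u = id`) if and only if every element `g ∈ G` whose image in `A` has
order at most 2 itself has order at most 2.
-/

theorem stmt_2 {G A : Type*} [AddCommGroup G] [AddCommGroup A]
    (u : ZMod 2 →+ G) (h : G →+ A)
    (hu : Function.Injective u) (hh : Function.Surjective h)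
    (hex : ∀ g : G, h g = 0 ↔ g ∈ u.range) :
    (∃ κ : G →+ ZMod 2, ∀ x : ZMod 2, κ (u x) = x) ↔
      (∀ g : G, h g + h g = 0 → g + g = 0) := by
  constructor
  · rintro ⟨κ, hκ⟩ g hg
    have h2 : h (g + g) = 0 := by rw [map_add]; exact hg
    obtain ⟨x, hx⟩ := (hex _).mp h2
    have hx0 : κ (g + g) = x := by rw [← hx, hκ]
    have hz : κ (g + g) = 0 := by
      rw [map_add]
      exact (by decide : ∀ y : ZMod 2, y + y = 0) _
    rw [hz] at hx0
    rw [← hx, ← hx0, map_zero]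
  · intro H
    -- quotient by 2G
    set N : AddSubgroup G := AddMonoidHom.range ((2 : ℕ) • AddMonoidHom.id G) with hN
    have hNmem : ∀ x : G, (2 : ℕ) • x ∈ N := fun x => ⟨x, rfl⟩
    letI : Module (ZMod 2) (G ⧸ N) := QuotientAddGroup.zmodModule hNmem
    letI : Module (ZMod 2) (ZMod 2) := inferInstance
    set π : G →+ G ⧸ N := QuotientAddGroup.mk' N with hπ
    set φ : ZMod 2 →ₗ[ZMod 2] G ⧸ N := (π.comp u).toZModLinearMap 2 with hφ
    have hu1 : π (u 1) ≠ 0 := by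
      intro h0
      have : u 1 ∈ N := (QuotientAddGroup.eq_zero_iff _).mp h0
      obtain ⟨g, hg⟩ := this
      replace hg : g + g = u 1 := by
        simpa [two_nsmul] using hg
      have hg2 : h g + h g = 0 := by
        have : h (g + g) = 0 := by
          rw [hg]; exact (hex _).mpr ⟨1, rfl⟩
        rwa [map_add] at this
      have : g + g = 0 := H g hg2
      rw [this] at hg
      have : (1 : ZMod 2) = 0 := hu (by rw [← hg, map_zero])
      exact one_ne_zero this
    have hinj : LinearMap.ker φ = ⊥ := by
      rw [LinearMap.ker_eq_bot']
      intro m hm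
      fin_cases m
      · rfl
      · exact absurd hm hu1
    obtain ⟨ℓ, hℓ⟩ := φ.exists_leftInverse_of_injective hinj
    refine ⟨(ℓ.toAddMonoidHom).comp π, fun x => ?_⟩
    have := congrArg (fun f => f x) (congrArg LinearMap.toAddMonoidHom hℓ)
    have h' : ℓ (φ x) = x := by simpa using this
    exact h'
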